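/- Let r, q₂, q₁ be differentiable functions with 3q₂' = 2r(q₂²−1) + q₂q₁ and 3q₁' = 2r q₂ q₁ + q₁² + 2(t − r²) − 2r' q₂. Then r₁ = 2r q₂ + q₁ satisfies 3r₁' = r₁² + 4r' q₂ + 2(t − 3r²), provided r'' = 2r³ − 2tr − 1. -/
import Mathlib

/-- From equations (3.17)–(3.18), the combination `r₁ = 2rq₂ + q₁` satisfies
the Riccati-type equation (3.19), given that `r` solves
`r'' = 2r³ - 2tr - 1`. -/
theorem stmt_16 (r q₂ q₁ : ℝ → ℝ)
    (hrd : Differentiable ℝ r) (hrd2 : Differentiable ℝ (deriv r))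
    (hq2d : Differentiable ℝ q₂) (hq1d : Differentiable ℝ q₁)
    (h17 : ∀ t, 3 * deriv q₂ t = 2 * r t * (q₂ t ^ 2 - 1) + q₂ t * q₁ t)
    (h18 : ∀ t, 3 * deriv q₁ t = 2 * r t * q₂ t * q₁ t + q₁ t ^ 2
      + 2 * (t - r t ^ 2) - 2 * deriv r t * q₂ t)
    (hPII : ∀ t, deriv (deriv r) t = 2 * r t ^ 3 - 2 * t * r t - 1) :
    ∀ t, 3 * deriv (fun s => 2 * r s * q₂ s + q₁ s) t
      = (2 * r t * q₂ t + q₁ t) ^ 2 + 4 * deriv r t * q₂ t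
        + 2 * (t - 3 * r t ^ 2) := by
  intro t
  have hd : deriv (fun s => 2 * r s * q₂ s + q₁ s) t
      = 2 * deriv r t * q₂ t + 2 * r t * deriv q₂ t + deriv q₁ t := by
    have h1 : HasDerivAt (fun s => 2 * r s * q₂ s + q₁ s)
        ((2 * deriv r t) * q₂ t + (2 * r t) * deriv q₂ t + deriv q₁ t) t := by
      exact (((hrd t).hasDerivAt.const_mul 2).mul (hq2d t).hasDerivAt).add
        (hq1d t).hasDerivAt
    simpa using h1.deriv
  rw [hd]
  have e2 := h17 t
  have e1 := h18 t
  linear_combination 2 * r t * e2 + e1
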